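/- Let G be a bipartite graph with bipartition V(G) = X ∪ Y. Then si(G) ≤ min{|X|, |Y|}. -/
import Mathlib


/-- `(a, b, L)` is a `d`-simultaneous interval representation of `G`:
each vertex `v` gets a nonempty open interval `(a v, b v)` and a label set
`L v ⊆ {1,…,d}`, and distinct vertices are adjacent iff both their intervals
and their label sets intersect. -/
def IsSIRep {V : Type*} (G : SimpleGraph V) (d : ℕ)
    (a b : V → ℝ) (L : V → Finset (Fin d)) : Prop :=
  (∀ v, a v < b v) ∧
  ∀ u v : V, u ≠ v →
    (G.Adj u v ↔ (Set.Ioo (a u) (b u) ∩ Set.Ioo (a v) (b v)).Nonempty ∧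
      (L u ∩ L v).Nonempty)

/-- The simultaneous interval number of `G`. -/
noncomputable def si {V : Type*} (G : SimpleGraph V) : ℕ :=
  sInf {d | ∃ a b L, IsSIRep G d a b L}

theorem si_le_card_left {V : Type*} [Fintype V] [DecidableEq V]
    (G : SimpleGraph V) (X : Finset V)
    (hX : ∀ u ∈ X, ∀ v ∈ X, ¬ G.Adj u v)
    (hY : ∀ u ∉ X, ∀ v ∉ X, ¬ G.Adj u v) :
    si G ≤ X.card := by
  classical
  set N := Fintype.card V with hN
  set e : V ≃ Fin N := Fintype.equivFin V with he
  apply Nat.sInf_le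
  refine ⟨fun v => if v ∈ X then (-1 : ℝ) else ((e v : ℕ) : ℝ),
          fun v => if v ∈ X then ((N : ℝ) + 1) else ((e v : ℕ) : ℝ) + 1,
          fun v => if h : v ∈ X then {X.equivFin ⟨v, h⟩}
                   else Finset.univ.filter (fun i => G.Adj ((X.equivFin.symm i : X) : V) v),
          ?_, ?_⟩
  · intro v
    by_cases h : v ∈ X <;> simp only [if_pos, if_neg, h, if_true, if_false]
    · have : (0:ℝ) ≤ (N : ℝ) := Nat.cast_nonneg _
      linarith
    · linarith
  · intro u v huv
    by_cases hu : u ∈ X <;> by_cases hv : v ∈ X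
    · -- both in X
      simp only [hu, hv, if_true, dif_pos]
      constructor
      · intro hadj; exact absurd hadj (hX u hu v hv)
      · rintro ⟨-, j, hj⟩
        simp only [Finset.mem_inter, Finset.mem_singleton] at hj
        have : X.equivFin ⟨u, hu⟩ = X.equivFin ⟨v, hv⟩ := by rw [← hj.1, hj.2]
        have := X.equivFin.injective this
        exact absurd (congrArg Subtype.val this) huv
    · -- u ∈ X, v ∉ X
      simp only [hu, hv, if_true, if_false, dif_pos, dif_neg, not_false_iff]
      have hkN : ((e v : ℕ) : ℝ) < (N : ℝ) := by exact_mod_cast (e v).isLt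
      have hk0 : (0:ℝ) ≤ ((e v : ℕ) : ℝ) := Nat.cast_nonneg _
      constructor
      · intro hadj
        refine ⟨⟨((e v : ℕ) : ℝ) + 1/2, ⟨by linarith, by linarith⟩, ⟨by linarith, by linarith⟩⟩,
                ⟨X.equivFin ⟨u, hu⟩, ?_⟩⟩
        simp only [Finset.mem_inter, Finset.mem_singleton, Finset.mem_filter,
          Finset.mem_univ, true_and, and_true, Equiv.symm_apply_apply]
        exact hadj
      · rintro ⟨-, j, hj⟩
        simp only [Finset.mem_inter, Finset.mem_singleton, Finset.mem_filter,
          Finset.mem_univ, true_and] at hj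
        rw [hj.1, Equiv.symm_apply_apply] at hj
        exact hj.2
    · -- u ∉ X, v ∈ X
      simp only [hu, hv, if_true, if_false, dif_pos, dif_neg, not_false_iff]
      have hkN : ((e u : ℕ) : ℝ) < (N : ℝ) := by exact_mod_cast (e u).isLt
      have hk0 : (0:ℝ) ≤ ((e u : ℕ) : ℝ) := Nat.cast_nonneg _
      constructor
      · intro hadj
        refine ⟨⟨((e u : ℕ) : ℝ) + 1/2, ⟨by linarith, by linarith⟩, ⟨by linarith, by linarith⟩⟩,
                ⟨X.equivFin ⟨v, hv⟩, ?_⟩⟩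
        simp only [Finset.mem_inter, Finset.mem_singleton, Finset.mem_filter,
          Finset.mem_univ, true_and, and_true, Equiv.symm_apply_apply]
        exact G.adj_symm hadj
      · rintro ⟨-, j, hj⟩
        simp only [Finset.mem_inter, Finset.mem_singleton, Finset.mem_filter,
          Finset.mem_univ, true_and] at hj
        rw [hj.2, Equiv.symm_apply_apply] at hj
        exact G.adj_symm hj.1
    · -- both ∉ X
      simp only [hu, hv, if_false, dif_neg, not_false_iff]
      constructor
      · intro hadj; exact absurd hadj (hY u hu v hv)
      · rintro ⟨⟨x, ⟨hx1, hx2⟩, ⟨hx3, hx4⟩⟩, -⟩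
        exfalso
        have hne : (e u : ℕ) ≠ (e v : ℕ) := by
          intro h
          exact huv (e.injective (Fin.val_injective h))
        rcases hne.lt_or_gt with h | h
        · have : ((e u : ℕ) : ℝ) + 1 ≤ ((e v : ℕ) : ℝ) := by exact_mod_cast h
          linarith
        · have : ((e v : ℕ) : ℝ) + 1 ≤ ((e u : ℕ) : ℝ) := by exact_mod_cast h
          linarith

/-- For a bipartite graph with bipartition `X ∪ Y`, `si G ≤ min |X| |Y|`. -/
theorem si_le_min_bipartition {V : Type*} [Fintype V] [DecidableEq V]
    (G : SimpleGraph V) (X Y : Finset V)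
    (hU : X ∪ Y = Finset.univ) (hD : Disjoint X Y)
    (hX : ∀ u ∈ X, ∀ v ∈ X, ¬ G.Adj u v)
    (hY : ∀ u ∈ Y, ∀ v ∈ Y, ¬ G.Adj u v) :
    si G ≤ min X.card Y.card := by
  have memY : ∀ v, v ∉ X → v ∈ Y := by
    intro v hv
    have : v ∈ X ∪ Y := hU ▸ Finset.mem_univ v
    rcases Finset.mem_union.1 this with h | h
    · exact absurd h hv
    · exact h
  have memX : ∀ v, v ∉ Y → v ∈ X := by
    intro v hv
    have : v ∈ X ∪ Y := hU ▸ Finset.mem_univ v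
    rcases Finset.mem_union.1 this with h | h
    · exact h
    · exact absurd h hv
  rw [le_min_iff]
  constructor
  · exact si_le_card_left G X hX (fun u hu v hv => hY u (memY u hu) v (memY v hv))
  · exact si_le_card_left G Y hY (fun u hu v hv => hX u (memX u hu) v (memX v hv))
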